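/- Let {p_j} enumerate a set of primes of natural density 1/4 in increasing order and d_n = (∏_{j=1}^n (1+p_j))². Then for every t < 1 there exists a constant c_t > 0 such that 2^{2n} ≥ c_t · exp((log d_n)^t) for all n. -/

import Mathlib

open Filter

private lemma exists_pos_forall_le' {f : ℕ → ℝ} (hf : ∀ n, 0 < f n) (N : ℕ)
    (h : ∀ n, N ≤ n → 1 ≤ f n) : ∃ c : ℝ, 0 < c ∧ ∀ n, c ≤ f n := by
  rcases Nat.eq_zero_or_pos N with h0 | h0
  · exact ⟨1, one_pos, fun n => h n (h0 ▸ Nat.zero_le n)⟩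
  · have hne : ((Finset.range N).image f).Nonempty :=
      ⟨f 0, Finset.mem_image.2 ⟨0, Finset.mem_range.2 h0, rfl⟩⟩
    refine ⟨min 1 (((Finset.range N).image f).min' hne), ?_, ?_⟩
    · refine lt_min one_pos ?_
      obtain ⟨x, _, hx⟩ := Finset.mem_image.1 (Finset.min'_mem _ hne)
      exact hx ▸ hf x
    · intro n
      rcases lt_or_ge n N with hn | hn
      · exact le_trans (min_le_right _ _)
          (Finset.min'_le _ _ (Finset.mem_image.2 ⟨n, Finset.mem_range.2 hn, rfl⟩))
      · exact le_trans (min_le_left _ _) (h n hn)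

private lemma centralBinom_le_pow (m : ℕ) (hm : 1 ≤ m) :
    Nat.centralBinom m ≤ (2 * m) ^ Nat.primeCounting (2 * m) := by
  have hpos : 0 < Nat.centralBinom m := Nat.centralBinom_pos m
  have h2m : 0 < 2 * m := by omega
  have hsub : (Nat.centralBinom m).primeFactors ⊆
      (Finset.range (2 * m + 1)).filter Nat.Prime := by
    intro q hq
    have hqp : q.Prime := Nat.prime_of_mem_primeFactors hq
    have hν : (Nat.centralBinom m).factorization q ≠ 0 := by
      have := Nat.support_factorization (n := Nat.centralBinom m)
      rw [← this] at hq
      exact Finsupp.mem_support_iff.1 hq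
    have hle : q ^ ((Nat.centralBinom m).factorization q) ≤ 2 * m := by
      have := Nat.pow_factorization_choose_le (p := q) (n := 2 * m) (k := m) h2m
      simpa [Nat.centralBinom] using this
    have : q ≤ q ^ ((Nat.centralBinom m).factorization q) :=
      Nat.le_self_pow hν q
    exact Finset.mem_filter.2 ⟨Finset.mem_range.2 (by omega), hqp⟩
  have hπ : ((Nat.centralBinom m).primeFactors).card ≤ Nat.primeCounting (2 * m) := by
    rw [Nat.primeCounting, Nat.primeCounting', Nat.count_eq_card_filter_range]
    exact Finset.card_le_card hsub
  calc Nat.centralBinom m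
      = ∏ q ∈ (Nat.centralBinom m).primeFactors,
          q ^ ((Nat.centralBinom m).factorization q) := by
        have h := Nat.factorization_prod_pow_eq_self hpos.ne'
        rw [Finsupp.prod, Nat.support_factorization] at h
        exact h.symm
    _ ≤ ∏ q ∈ (Nat.centralBinom m).primeFactors, (2 * m) := by
        refine Finset.prod_le_prod' (fun q _ => ?_)
        have := Nat.pow_factorization_choose_le (p := q) (n := 2 * m) (k := m) h2m
        simpa [Nat.centralBinom] using this
    _ = (2 * m) ^ ((Nat.centralBinom m).primeFactors).card := by
        rw [Finset.prod_const]
    _ ≤ (2 * m) ^ Nat.primeCounting (2 * m) := Nat.pow_le_pow_right h2m hπ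

set_option maxHeartbeats 1000000 in
/-- Let `p 0 < p 1 < ⋯` enumerate a set `P` of primes of natural density `1/4`
in increasing order, and let `d n = (∏_{j<n} (1 + p j))²`.  Then for every
`t < 1` there is a constant `c_t > 0` with
`2^(2n) ≥ c_t · exp((log d n)^t)` for all `n`. -/
theorem two_pow_ge_exp_log_pow_of_density_quarter
    (P : Set ℕ) [DecidablePred (· ∈ P)] (hprime : ∀ q ∈ P, q.Prime)
    (hdens : Tendsto
      (fun N : ℕ => (((Finset.range (N + 1)).filter (· ∈ P)).card : ℝ)
        / (Nat.primeCounting N : ℝ)) atTop (nhds (1 / 4)))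
    (p : ℕ → ℕ) (hmono : StrictMono p) (hrange : Set.range p = P)
    (d : ℕ → ℕ) (hd : ∀ n, d n = (∏ j ∈ Finset.range n, (1 + p j)) ^ 2) :
    ∀ t : ℝ, t < 1 → ∃ c : ℝ, 0 < c ∧
      ∀ n : ℕ, (2 : ℝ) ^ (2 * n) ≥ c * Real.exp (Real.log (d n) ^ t) := by
  intro t ht
  -- Step 1: counting elements of `P` up to `p n`.
  have hcard : ∀ n : ℕ, ((Finset.range (p n + 1)).filter (· ∈ P)).card = n + 1 := by
    intro n
    have himg : (Finset.range (p n + 1)).filter (· ∈ P)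
        = (Finset.range (n + 1)).image p := by
      ext q
      simp only [Finset.mem_filter, Finset.mem_range, Finset.mem_image, Nat.lt_succ_iff]
      constructor
      · rintro ⟨hq1, hq2⟩
        have : q ∈ Set.range p := hrange ▸ hq2
        obtain ⟨m, rfl⟩ := this
        exact ⟨m, hmono.le_iff_le.1 hq1, rfl⟩
      · rintro ⟨m, hm, rfl⟩
        exact ⟨hmono.le_iff_le.2 hm, by rw [← hrange]; exact ⟨m, rfl⟩⟩
    rw [himg, Finset.card_image_of_injective _ hmono.injective, Finset.card_range]
  -- Step 2: density ⇒ π (p n) ≤ 8 (n + 1) for large n.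
  obtain ⟨N₀, hN₀⟩ := eventually_atTop.1
    (hdens.eventually (lt_mem_nhds (show (1:ℝ)/8 < 1/4 by norm_num)))
  have hπp : ∀ n, N₀ ≤ n → Nat.primeCounting (p n) ≤ 8 * (n + 1) := by
    intro n hn
    have h1 := hN₀ (p n) (le_trans hn hmono.le_apply)
    rw [hcard n] at h1
    by_contra hc
    push_neg at hc
    have hA : (8:ℝ) * ((n:ℝ) + 1) < (Nat.primeCounting (p n) : ℝ) := by
      exact_mod_cast hc
    have hApos : (0:ℝ) < (Nat.primeCounting (p n) : ℝ) :=
      lt_trans (by positivity) hA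
    rw [div_lt_div_iff₀ (by norm_num) hApos] at h1
    push_cast at h1
    nlinarith
  -- Step 3: Chebyshev-type bound ⇒ p n ≤ 64 (n+1)² for large n.
  set N₁ := max N₀ 30 with hN₁def
  have hcheb : ∀ n, N₁ ≤ n → p n ≤ 64 * (n + 1) ^ 2 := by
    intro n hn
    by_contra hc
    push_neg at hc
    have hsq : 1 ≤ (n + 1) ^ 2 := Nat.one_le_pow _ _ (by omega)
    set m := 32 * (n + 1) ^ 2 with hmdef
    have hm4 : 4 ≤ m := by omega
    have hk : Nat.primeCounting (2 * m) ≤ 8 * (n + 1) := by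
      have h2m : 2 * m ≤ p n := by omega
      exact le_trans (Nat.monotone_primeCounting h2m)
        (hπp n (le_trans (le_max_left _ _) hn))
    have key : 4 ^ m < m * (2 * m) ^ (8 * (n + 1)) :=
      lt_of_lt_of_le (Nat.four_pow_lt_mul_centralBinom m hm4)
        (Nat.mul_le_mul_left m (le_trans (centralBinom_le_pow m (by omega))
          (Nat.pow_le_pow_right (by omega) hk)))
    have keyR : (4:ℝ) ^ m < (m:ℝ) * (2 * (m:ℝ)) ^ (8 * (n + 1)) := by
      exact_mod_cast key
    have hmpos : (0:ℝ) < (m:ℝ) := by positivity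
    have hlog := Real.log_lt_log (by positivity) keyR
    rw [Real.log_pow, Real.log_mul hmpos.ne' (by positivity), Real.log_pow] at hlog
    set x : ℝ := (n : ℝ) with hxdef
    have hx : (30:ℝ) ≤ x := by
      have h30 : (30:ℕ) ≤ n := le_trans (le_max_right _ _) hn
      rw [hxdef]
      exact_mod_cast h30
    have hmcast : (m:ℝ) = 32 * (x + 1) ^ 2 := by
      rw [hmdef]; push_cast; ring
    have hxp : (0:ℝ) < x + 1 := by linarith
    have hlogm : Real.log (m:ℝ) = Real.log 32 + 2 * Real.log (x + 1) := by
      rw [hmcast, Real.log_mul (by norm_num) (by positivity), Real.log_pow]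
      norm_num
    have hlog2m : Real.log (2 * (m:ℝ)) = Real.log 64 + 2 * Real.log (x + 1) := by
      rw [hmcast, show (2:ℝ) * (32 * (x+1)^2) = 64 * (x+1)^2 by ring,
        Real.log_mul (by norm_num) (by positivity), Real.log_pow]
      norm_num
    rw [hlogm, hlog2m, hmcast] at hlog
    have hl1 : Real.log (x + 1) ≤ x := by
      have := Real.log_le_sub_one_of_pos hxp; linarith
    have hl0 : 0 ≤ Real.log (x + 1) := Real.log_nonneg (by linarith)
    have hl32 : Real.log 32 ≤ 31 := by
      have := Real.log_le_sub_one_of_pos (show (0:ℝ) < 32 by norm_num); linarith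
    have hl64 : Real.log 64 ≤ 63 := by
      have := Real.log_le_sub_one_of_pos (show (0:ℝ) < 64 by norm_num); linarith
    have hl4 : 1 ≤ Real.log 4 := by
      rw [show (4:ℝ) = 2 ^ 2 by norm_num, Real.log_pow]
      push_cast
      nlinarith [Real.log_two_gt_d9]
    have hL : 32 * (x + 1) ^ 2 ≤ 32 * (x + 1) ^ 2 * Real.log 4 := by
      have h0 : (0:ℝ) ≤ 32 * (x + 1) ^ 2 := by positivity
      calc 32 * (x + 1) ^ 2 = 32 * (x + 1) ^ 2 * 1 := by ring
        _ ≤ 32 * (x + 1) ^ 2 * Real.log 4 := mul_le_mul_of_nonneg_left hl4 h0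
    have hR : (8 * ((n:ℝ) + 1)) * (Real.log 64 + 2 * Real.log (x + 1))
        ≤ 8 * (x + 1) * (63 + 2 * x) := by
      have h8 : (0:ℝ) ≤ 8 * (x + 1) := by linarith
      have hbase : Real.log 64 + 2 * Real.log (x + 1) ≤ 63 + 2 * x := by linarith
      calc (8 * ((n:ℝ) + 1)) * (Real.log 64 + 2 * Real.log (x + 1))
          = 8 * (x + 1) * (Real.log 64 + 2 * Real.log (x + 1)) := by rw [hxdef]
        _ ≤ 8 * (x + 1) * (63 + 2 * x) := by
            exact mul_le_mul_of_nonneg_left hbase h8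
    have hpoly : Real.log 32 + 2 * Real.log (x + 1) + 8 * (x + 1) * (63 + 2 * x)
        ≤ 32 * (x + 1) ^ 2 := by nlinarith
    have hcastm : ((8 * (n + 1) : ℕ) : ℝ) = 8 * ((n:ℝ) + 1) := by push_cast; ring
    rw [hcastm] at hlog
    linarith
  -- Step 4: uniform bound 1 + p j ≤ K (n+1)² for j < n.
  set K := p N₁ + 65 with hKdef
  have hKbound : ∀ n, ∀ j, j < n → 1 + p j ≤ K * (n + 1) ^ 2 := by
    intro n j hj
    have h1 : 1 ≤ (n + 1) ^ 2 := Nat.one_le_pow _ _ (by omega)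
    rcases lt_or_ge j N₁ with hle | hge
    · have hpj : p j ≤ p N₁ := hmono.monotone hle.le
      calc 1 + p j ≤ K := by omega
        _ ≤ K * (n + 1) ^ 2 := Nat.le_mul_of_pos_right _ (by omega)
    · have hpj := hcheb j hge
      have hj1 : 1 ≤ (j + 1) ^ 2 := Nat.one_le_pow _ _ (by omega)
      have hjn : (j + 1) ^ 2 ≤ (n + 1) ^ 2 := Nat.pow_le_pow_left (by omega) 2
      calc 1 + p j ≤ 65 * (j + 1) ^ 2 := by omega
        _ ≤ K * (n + 1) ^ 2 := Nat.mul_le_mul (by omega) hjn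
  have hdle : ∀ n, d n ≤ (K * (n + 1) ^ 2) ^ (2 * n) := by
    intro n
    rw [hd n, show 2 * n = n * 2 by ring, pow_mul]
    refine Nat.pow_le_pow_left ?_ 2
    calc ∏ j ∈ Finset.range n, (1 + p j)
        ≤ ∏ j ∈ Finset.range n, (K * (n + 1) ^ 2) :=
          Finset.prod_le_prod' (fun j hj => hKbound n j (Finset.mem_range.1 hj))
      _ = (K * (n + 1) ^ 2) ^ n := by rw [Finset.prod_const, Finset.card_range]
  have hdpos : ∀ n, 1 ≤ d n := by
    intro n
    rw [hd n]
    exact Nat.one_le_pow _ _ (Finset.prod_pos (fun j _ => by omega))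
  have hKpos : (0:ℝ) < (K:ℝ) := by
    have : 0 < K := by omega
    exact_mod_cast this
  have hlogd : ∀ n : ℕ, Real.log (d n)
      ≤ (2 * n : ℝ) * (Real.log K + 2 * Real.log ((n:ℝ) + 1)) := by
    intro n
    have hc : ((d n : ℕ) : ℝ) ≤ (((K * (n + 1) ^ 2) ^ (2 * n) : ℕ) : ℝ) :=
      Nat.cast_le.2 (hdle n)
    have hdn0 : (0:ℝ) < ((d n : ℕ) : ℝ) := by
      exact_mod_cast lt_of_lt_of_le Nat.zero_lt_one (hdpos n)
    have h2 := Real.log_le_log hdn0 hc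
    have hx1 : (0:ℝ) < (n:ℝ) + 1 := by positivity
    have hcast : (((K * (n + 1) ^ 2) ^ (2 * n) : ℕ) : ℝ)
        = ((K:ℝ) * ((n:ℝ) + 1) ^ 2) ^ (2 * n) := by
      rw [Nat.cast_pow, Nat.cast_mul, Nat.cast_pow]
      norm_cast
    rw [hcast, Real.log_pow,
      Real.log_mul hKpos.ne' (by positivity : ((n:ℝ) + 1) ^ 2 ≠ 0),
      Real.log_pow] at h2
    refine le_trans h2 (le_of_eq ?_)
    push_cast
    ring
  -- log (d n) ≥ 1 for n ≥ 1.
  have hlogd1 : ∀ n, 1 ≤ n → 1 ≤ Real.log (d n) := by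
    intro n hn
    have hp0 : 2 ≤ p 0 :=
      (hprime (p 0) (hrange ▸ Set.mem_range_self 0)).two_le
    have h3 : 3 ≤ ∏ j ∈ Finset.range n, (1 + p j) := by
      have hsingle : 1 + p 0 ≤ ∏ j ∈ Finset.range n, (1 + p j) := by
        simpa using Finset.single_le_prod' (f := fun j => 1 + p j)
          (fun j _ => Nat.le_add_right 1 (p j))
          (Finset.mem_range.2 (show 0 < n by omega))
      omega
    have h9 : 9 ≤ d n := by
      rw [hd n]
      calc 9 = 3 ^ 2 := by norm_num
        _ ≤ (∏ j ∈ Finset.range n, (1 + p j)) ^ 2 := Nat.pow_le_pow_left h3 2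
    have he : Real.exp 1 ≤ ((d n : ℕ) : ℝ) := by
      have h9' : (9:ℝ) ≤ ((d n : ℕ) : ℝ) := by exact_mod_cast h9
      nlinarith [Real.exp_one_lt_d9]
    calc (1:ℝ) = Real.log (Real.exp 1) := (Real.log_exp 1).symm
      _ ≤ Real.log (d n) := Real.log_le_log (Real.exp_pos 1) he
  have hlog2pos : (0:ℝ) < Real.log 2 := Real.log_pos (by norm_num)
  -- Step 5: the eventual inequality (log d n)^t ≤ 2n log 2.
  have hev : ∃ N₂ : ℕ, ∀ n, N₂ ≤ n → Real.log (d n) ^ t ≤ (2 * n : ℝ) * Real.log 2 := by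
    rcases le_or_gt t 0 with ht0 | ht0
    · refine ⟨1, fun n hn => ?_⟩
      have h1 : Real.log (d n) ^ t ≤ 1 :=
        Real.rpow_le_one_of_one_le_of_nonpos (hlogd1 n hn) ht0
      have hxn : (1:ℝ) ≤ (n:ℝ) := by exact_mod_cast hn
      nlinarith [Real.log_two_gt_d9]
    · -- 0 < t < 1
      set ε := (1 - t) / (2 * t) with hεdef
      have hε : 0 < ε := by
        apply div_pos <;> linarith
      -- eventual bound : log K + 4 log x ≤ x ^ ε
      have hlo : (fun x : ℝ => Real.log K + 4 * Real.log x)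
          =o[atTop] fun x : ℝ => x ^ ε := by
        have hb := (isLittleO_log_rpow_atTop hε).const_mul_left 4
        have ha : (fun _ : ℝ => Real.log K) =o[atTop] fun x : ℝ => x ^ ε := by
          refine Asymptotics.isLittleO_const_left.2 (Or.inr ?_)
          have := tendsto_rpow_atTop hε
          exact tendsto_norm_atTop_atTop.comp this
        simpa using ha.add hb
      have hE1 : ∀ᶠ x : ℝ in atTop, Real.log K + 4 * Real.log x ≤ x ^ ε := by
        filter_upwards [Asymptotics.isLittleO_iff.1 hlo one_pos,
          eventually_ge_atTop (1:ℝ)] with x hx hx1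
        have h0 : (0:ℝ) ≤ x ^ ε := Real.rpow_nonneg (by linarith) ε
        calc Real.log K + 4 * Real.log x ≤ ‖Real.log K + 4 * Real.log x‖ :=
              le_abs_self _
          _ ≤ 1 * ‖x ^ ε‖ := hx
          _ = x ^ ε := by rw [one_mul, Real.norm_eq_abs, abs_of_nonneg h0]
      have hE1n : ∀ᶠ n : ℕ in atTop,
          Real.log K + 4 * Real.log (n:ℝ) ≤ (n:ℝ) ^ ε :=
        tendsto_natCast_atTop_atTop.eventually hE1
      -- eventual bound : x ^ ((t-1)/2) ≤ 2 log 2 / 2^t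
      have hδ : (0:ℝ) < 2 * Real.log 2 / (2:ℝ) ^ t := by
        have : (0:ℝ) < (2:ℝ) ^ t := Real.rpow_pos_of_pos (by norm_num) t
        positivity
      have hE2 : ∀ᶠ n : ℕ in atTop,
          (n:ℝ) ^ ((t - 1) / 2) ≤ 2 * Real.log 2 / (2:ℝ) ^ t := by
        have h0 : Tendsto (fun x : ℝ => x ^ (-((1 - t) / 2))) atTop (nhds 0) :=
          tendsto_rpow_neg_atTop (by linarith)
        have h1 : Tendsto (fun n : ℕ => ((n:ℝ)) ^ ((t - 1) / 2)) atTop (nhds 0) := by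
          have := h0.comp tendsto_natCast_atTop_atTop
          simpa [Function.comp_def, show -((1 - t) / 2) = (t - 1) / 2 by ring] using this
        exact h1.eventually (eventually_le_nhds hδ)
      obtain ⟨N₂, hN₂⟩ := eventually_atTop.1 (hE1n.and (hE2.and (eventually_ge_atTop 2)))
      refine ⟨N₂, fun n hn => ?_⟩
      obtain ⟨h1, h2, hn2⟩ := hN₂ n hn
      set x : ℝ := (n : ℝ) with hxdef
      have hx2 : (2:ℝ) ≤ x := by rw [hxdef]; exact_mod_cast hn2
      have hx0 : (0:ℝ) < x := by linarith
      -- log (x+1) ≤ 2 log x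
      have hstep1 : Real.log (x + 1) ≤ 2 * Real.log x := by
        have hle : x + 1 ≤ x ^ 2 := by nlinarith
        calc Real.log (x + 1) ≤ Real.log (x ^ 2) := Real.log_le_log (by linarith) hle
          _ = 2 * Real.log x := by rw [Real.log_pow]; norm_num
      -- log (d n) ≤ 2 x^(1+ε)
      have hstep2 : Real.log (d n) ≤ 2 * x ^ (1 + ε) := by
        have ha := hlogd n
        have hb : Real.log K + 2 * Real.log (x + 1) ≤ x ^ ε := by
          have := Real.log_nonneg (show (1:ℝ) ≤ x by linarith)
          linarith
        have hc : (2 * (n:ℝ)) * (Real.log K + 2 * Real.log (x + 1))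
            ≤ (2 * x) * x ^ ε := by
          have h2x : (0:ℝ) ≤ 2 * x := by linarith
          exact mul_le_mul_of_nonneg_left hb h2x
        have hd' : (2 * x) * x ^ ε = 2 * x ^ (1 + ε) := by
          rw [Real.rpow_add hx0, Real.rpow_one]; ring
        calc Real.log (d n) ≤ (2 * (n:ℝ)) * (Real.log K + 2 * Real.log ((n:ℝ) + 1)) := ha
          _ ≤ (2 * x) * x ^ ε := hc
          _ = 2 * x ^ (1 + ε) := hd'
      have hlogdnn : 0 ≤ Real.log (d n) := by
        apply Real.log_nonneg
        exact_mod_cast hdpos n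
      have hstep3 : Real.log (d n) ^ t ≤ (2 * x ^ (1 + ε)) ^ t :=
        Real.rpow_le_rpow hlogdnn hstep2 ht0.le
      have hxε : (0:ℝ) ≤ x ^ (1 + ε) := Real.rpow_nonneg hx0.le _
      have hstep4 : (2 * x ^ (1 + ε)) ^ t = (2:ℝ) ^ t * x ^ ((1 + ε) * t) := by
        rw [Real.mul_rpow (by norm_num) hxε, ← Real.rpow_mul hx0.le]
      have hexp : (1 + ε) * t = 1 + (t - 1) / 2 := by
        rw [hεdef]; field_simp; ring
      have hstep5 : x ^ ((1 + ε) * t) = x * x ^ ((t - 1) / 2) := by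
        rw [hexp, Real.rpow_add hx0, Real.rpow_one]
      have h2t : (0:ℝ) < (2:ℝ) ^ t := Real.rpow_pos_of_pos (by norm_num) t
      have hfinal : (2:ℝ) ^ t * (x * x ^ ((t - 1) / 2)) ≤ 2 * Real.log 2 * x := by
        have : x * x ^ ((t - 1) / 2) ≤ x * (2 * Real.log 2 / (2:ℝ) ^ t) :=
          mul_le_mul_of_nonneg_left h2 hx0.le
        calc (2:ℝ) ^ t * (x * x ^ ((t - 1) / 2))
            ≤ (2:ℝ) ^ t * (x * (2 * Real.log 2 / (2:ℝ) ^ t)) :=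
              mul_le_mul_of_nonneg_left this h2t.le
          _ = 2 * Real.log 2 * x := by field_simp
      have : Real.log (d n) ^ t ≤ 2 * Real.log 2 * x := by
        calc Real.log (d n) ^ t ≤ (2 * x ^ (1 + ε)) ^ t := hstep3
          _ = (2:ℝ) ^ t * x ^ ((1 + ε) * t) := hstep4
          _ = (2:ℝ) ^ t * (x * x ^ ((t - 1) / 2)) := by rw [hstep5]
          _ ≤ 2 * Real.log 2 * x := hfinal
      calc Real.log (d n) ^ t ≤ 2 * Real.log 2 * x := this
        _ = (2 * n : ℝ) * Real.log 2 := by rw [hxdef]; ring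
  -- Step 6: conclude with a finite minimum.
  obtain ⟨N₂, hN₂⟩ := hev
  have hfpos : ∀ n : ℕ, 0 < (2:ℝ) ^ (2 * n) / Real.exp (Real.log (d n) ^ t) := by
    intro n; positivity
  have hone : ∀ n, N₂ ≤ n →
      1 ≤ (2:ℝ) ^ (2 * n) / Real.exp (Real.log (d n) ^ t) := by
    intro n hn
    rw [le_div_iff₀ (Real.exp_pos _), one_mul]
    have h2pow : (2:ℝ) ^ (2 * n) = Real.exp ((2 * n : ℕ) * Real.log 2) := by
      rw [Real.exp_nat_mul, Real.exp_log (by norm_num : (0:ℝ) < 2)]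
    rw [h2pow]
    apply Real.exp_le_exp.2
    have := hN₂ n hn
    push_cast
    push_cast at this
    linarith
  obtain ⟨c, hc, hcle⟩ := exists_pos_forall_le' hfpos N₂ hone
  refine ⟨c, hc, fun n => ?_⟩
  have := hcle n
  rw [le_div_iff₀ (Real.exp_pos _)] at this
  exact this
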